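/- (Generating function identity for the semi-infinite dam.) Let π = (π_i)_{i≥0} be a nonnegative summable sequence with ∑_{i=0}^∞ π_i = 1 satisfying the stationarity equations ∑_{i=0}^∞ π_i P(i,n) = π_n for every n ∈ ℕ. Then for every real s with |s| ≤ 1, G(s) (H(s) − s) = (1 − s) p_0 π_0, where G(s) = ∑_{i=0}^∞ π_i s^i and H(s) = ∑_{i=0}^K p_i s^i. -/

import Mathlib

open scoped BigOperators
open MeasureTheory ProbabilityTheory Filter

/-- Transition matrix of the infinite-capacity Moran storage chain on `ℕ`:
`P 0 0 = p 0 + p 1`, `P 0 j = p (j+1)` for `j ≥ 1`, and for `i ≥ 1`,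
`P i j = p (j-i+1)` if `j ≥ i-1` and `P i j = 0` otherwise. -/
noncomputable def moranPInf (p : ℕ → ℝ) : ℕ → ℕ → ℝ := fun i j =>
  if i = 0 ∧ j = 0 then p 0 + p 1
  else if i ≤ j + 1 then p (j + 1 - i)
  else 0

/-- `qcoef p K k = (1/p₀) ∑_{j=k+1}^K p_j`. -/
noncomputable def qcoef (p : ℕ → ℝ) (K k : ℕ) : ℝ :=
  (∑ j ∈ Finset.Icc (k + 1) K, p j) / p 0

/-- generating function identity for the semi-infinite dam: any stationary
probability distribution `π` of the infinite-capacity Moran matrix satisfies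
`G(s)(H(s) − s) = (1 − s) p₀ π₀` for all `|s| ≤ 1`. -/
theorem stmt11 (K : ℕ) (hK : 2 ≤ K) (p : ℕ → ℝ) (hpnn : ∀ j, 0 ≤ p j)
    (hpsupp : ∀ j, K < j → p j = 0) (hpsum : ∑ j ∈ Finset.range (K + 1), p j = 1)
    (π : ℕ → ℝ) (hπnn : ∀ i, 0 ≤ π i) (hπsum : Summable π) (hπ1 : ∑' i, π i = 1)
    (hπP : ∀ n, ∑' i, π i * moranPInf p i n = π n) :
    ∀ s : ℝ, |s| ≤ 1 →
      (∑' i, π i * s ^ i) * ((∑ i ∈ Finset.range (K + 1), p i * s ^ i) - s)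
        = (1 - s) * p 0 * π 0 := by
  intro s hs
  set f : ℕ → ℝ := fun i => π i * s ^ i with hfdef
  set g : ℕ → ℝ := fun j => p j * s ^ j with hgdef
  -- norm summability of f
  have hf : Summable (fun i => ‖f i‖) := by
    refine Summable.of_nonneg_of_le (fun i => norm_nonneg _) (fun i => ?_) hπsum
    have h1 : ‖f i‖ = π i * |s| ^ i := by
      simp [hfdef, abs_mul, abs_of_nonneg (hπnn i), abs_pow]
    rw [h1]
    have : |s| ^ i ≤ 1 := pow_le_one₀ (abs_nonneg s) hs
    calc π i * |s| ^ i ≤ π i * 1 := by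
          exact mul_le_mul_of_nonneg_left this (hπnn i)
      _ = π i := mul_one _
  have hg : Summable (fun j => ‖g j‖) := by
    apply summable_of_ne_finset_zero (s := Finset.range (K + 1))
    intro j hj
    have : K < j := by simp [Finset.mem_range] at hj; omega
    simp [hgdef, hpsupp j this]
  -- H as a tsum
  have hH : (∑' j, g j) = ∑ i ∈ Finset.range (K + 1), p i * s ^ i := by
    apply tsum_eq_sum
    intro j hj
    have : K < j := by simpa using hj
    simp [hgdef, hpsupp j this]
  -- Cauchy product
  have hcauchy : ((∑' n, f n) * ∑' n, g n)
      = ∑' n, ∑ k ∈ Finset.range (n + 1), f k * g (n - k) :=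
    tsum_mul_tsum_eq_tsum_sum_range_of_summable_norm hf hg
  set h : ℕ → ℝ := fun n => ∑ k ∈ Finset.range (n + 1), f k * g (n - k) with hhdef
  have hhsum : Summable h :=
    (summable_norm_sum_mul_range_of_summable_norm hf hg).of_norm
  -- h n = s^n * c n where c n = ∑_{k ≤ n} π k p (n-k)
  have hhc : ∀ n, h n = s ^ n * ∑ k ∈ Finset.range (n + 1), π k * p (n - k) := by
    intro n
    rw [hhdef, Finset.mul_sum]
    apply Finset.sum_congr rfl
    intro k hk
    have hkn : k ≤ n := Nat.lt_succ_iff.mp (Finset.mem_range.mp hk)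
    have : s ^ k * s ^ (n - k) = s ^ n := by
      rw [← pow_add, Nat.add_sub_cancel' hkn]
    simp only [hfdef, hgdef]
    calc π k * s ^ k * (p (n - k) * s ^ (n - k))
        = (π k * p (n - k)) * (s ^ k * s ^ (n - k)) := by ring
      _ = s ^ n * (π k * p (n - k)) := by rw [this]; ring
  -- stationarity in finite form
  have hstat : ∀ n, π n = (∑ i ∈ Finset.range (n + 2), π i * p (n + 1 - i))
      + (if n = 0 then π 0 * p 0 else 0) := by
    intro n
    have h0 := hπP n
    have h1 : (∑' i, π i * moranPInf p i n)
        = ∑ i ∈ Finset.range (n + 2), π i * moranPInf p i n := by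
      apply tsum_eq_sum
      intro i hi
      have hin : n + 2 ≤ i := by simp [Finset.mem_range] at hi; omega
      have h2 : ¬ i ≤ n + 1 := by omega
      have h3 : ¬ (i = 0 ∧ n = 0) := by omega
      simp [moranPInf, h2, h3]
    rw [h1] at h0
    rw [← h0]
    have h4 : ∀ i ∈ Finset.range (n + 2), π i * moranPInf p i n
        = π i * p (n + 1 - i) + (if i = 0 ∧ n = 0 then π 0 * p 0 else 0) := by
      intro i hi
      have hin : i ≤ n + 1 := Nat.lt_succ_iff.mp (Finset.mem_range.mp hi)
      by_cases hc : i = 0 ∧ n = 0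
      · obtain ⟨hi0, hn0⟩ := hc
        subst hi0; subst hn0
        simp [moranPInf]
        ring
      · simp [moranPInf, hc, hin]
    rw [Finset.sum_congr rfl h4, Finset.sum_add_distrib]
    congr 1
    rcases Nat.eq_zero_or_pos n with hn0 | hn0
    · subst hn0
      simp
    · have : n ≠ 0 := Nat.pos_iff_ne_zero.mp hn0
      simp [this]
  -- shift: h (n+1) = π n * s^(n+1) - (if n = 0 then π 0 * p 0 * s else 0)
  have hshift : ∀ n, h (n + 1)
      = f n * s - (if n = 0 then π 0 * p 0 * s else 0) := by
    intro n
    rw [hhc (n + 1)]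
    have : (∑ k ∈ Finset.range (n + 2), π k * p (n + 1 - k))
        = π n - (if n = 0 then π 0 * p 0 else 0) := by
      have := hstat n
      linarith
    rw [this]
    rcases Nat.eq_zero_or_pos n with hn0 | hn0
    · subst hn0
      simp [hfdef]; ring
    · have hne : n ≠ 0 := Nat.pos_iff_ne_zero.mp hn0
      simp only [hne, if_false, sub_zero]
      simp [hfdef]; ring
  -- sum the shifted series
  have hsummf : Summable f := hf.of_norm
  have hind : Summable (fun n : ℕ => if n = 0 then π 0 * p 0 * s else 0) :=
    (hasSum_ite_eq 0 (π 0 * p 0 * s)).summable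
  have htail : (∑' n, h (n + 1)) = (∑' n, f n) * s - π 0 * p 0 * s := by
    calc (∑' n, h (n + 1))
        = ∑' n, (f n * s - (if n = 0 then π 0 * p 0 * s else 0)) := by
          exact tsum_congr hshift
      _ = (∑' n, f n * s) - ∑' n, (if n = 0 then π 0 * p 0 * s else 0) :=
          Summable.tsum_sub (hsummf.mul_right s) hind
      _ = (∑' n, f n) * s - π 0 * p 0 * s := by
          rw [tsum_mul_right]
          congr 1
          exact tsum_ite_eq 0 (fun _ => π 0 * p 0 * s)
  have hzero : h 0 = π 0 * p 0 := by
    simp [hhdef, hfdef, hgdef]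
  have hsplit : (∑' n, h n) = h 0 + ∑' n, h (n + 1) := Summable.tsum_eq_zero_add hhsum
  -- conclude
  have key : ((∑' n, f n) * ∑' n, g n)
      = π 0 * p 0 + ((∑' n, f n) * s - π 0 * p 0 * s) := by
    rw [hcauchy]
    rw [← hhdef] at *
    rw [hsplit, hzero, htail]
  rw [← hH]
  linear_combination key
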